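/- Let A and B be generators of bounded analytic semigroups on a Banach space E₀ with common domain E₁, satisfying uniform sectorial resolvent estimates ‖(λ-A)^{-1}‖_{L(E₀,E_j)} ≤ c₀ (1+|λ|)^{j-1} (j = 0,1) on a sector Σ_ϑ (and the same for B). Then there exists M > 0 depending only on c₀, ϑ, T such that for j ∈ {0,1} and t ∈ (0,T]: t^j ‖e^{tA} - e^{tB}‖_{L(E₀,E_j)} ≤ M ‖A - B‖_{L(E₁,E₀)}. -/

import Mathlib

open Set MeasureTheory

/-- `R` is the resolvent family of `A` (relative to the embedding `i : E₁ ↪ E₀`) on the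
sector `Σ_ϑ`, with the sectorial estimates `(1+|z|)^{1-j} ‖(z-A)^{-1}‖_{L(E₀,E_j)} ≤ c₀`. -/
def SectorialResolvent {E₀ E₁ : Type*}
    [NormedAddCommGroup E₀] [NormedSpace ℂ E₀]
    [NormedAddCommGroup E₁] [NormedSpace ℂ E₁]
    (i : E₁ →L[ℂ] E₀) (A : E₁ →L[ℂ] E₀) (R : ℂ → E₀ →L[ℂ] E₁) (ϑ c₀ : ℝ) : Prop :=
  ∀ z : ℂ, (z = 0 ∨ |Complex.arg z| ≤ ϑ + Real.pi / 2) →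
    (z • i - A).comp (R z) = ContinuousLinearMap.id ℂ E₀ ∧
    (R z).comp (z • i - A) = ContinuousLinearMap.id ℂ E₁ ∧
    (1 + ‖z‖) * ‖i.comp (R z)‖ ≤ c₀ ∧ ‖R z‖ ≤ c₀

/-- Parametrization of the contour `Γ_t`, consisting of the two rays
`{r e^{±i(ϑ+π/2)} : r ≥ 1/t}` and the arc `{t⁻¹ e^{iφ} : |φ| ≤ ϑ + π/2}`,
run from `∞·e^{-i(ϑ+π/2)}` to `∞·e^{+i(ϑ+π/2)}`. -/
noncomputable def contour (ϑ t u : ℝ) : ℂ :=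
  if u < -(ϑ + Real.pi / 2) then
    ((t⁻¹ + (-(ϑ + Real.pi / 2) - u) : ℝ) : ℂ) * Complex.exp (((-(ϑ + Real.pi / 2) : ℝ) : ℂ) * Complex.I)
  else if u ≤ ϑ + Real.pi / 2 then ((t⁻¹ : ℝ) : ℂ) * Complex.exp ((u : ℂ) * Complex.I)
  else ((t⁻¹ + (u - (ϑ + Real.pi / 2)) : ℝ) : ℂ) * Complex.exp (((ϑ + Real.pi / 2 : ℝ) : ℂ) * Complex.I)

/-- The derivative of the contour parametrization `u ↦ contour ϑ t u`. -/
noncomputable def contourDeriv (ϑ t u : ℝ) : ℂ :=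
  if u < -(ϑ + Real.pi / 2) then -Complex.exp (((-(ϑ + Real.pi / 2) : ℝ) : ℂ) * Complex.I)
  else if u ≤ ϑ + Real.pi / 2 then Complex.I * ((t⁻¹ : ℝ) : ℂ) * Complex.exp ((u : ℂ) * Complex.I)
  else Complex.exp (((ϑ + Real.pi / 2 : ℝ) : ℂ) * Complex.I)

/-- `S₁` is the analytic semigroup generated by `A`, `E₁`-valued, given by the Dunford
contour integral `e^{tA} = (2πi)⁻¹ ∫_{Γ_t} e^{tλ} (λ - A)⁻¹ dλ` for `t ∈ (0,T]`. -/
def IsDunfordSemigroup {E₀ E₁ : Type*}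
    [NormedAddCommGroup E₀] [NormedSpace ℂ E₀]
    [NormedAddCommGroup E₁] [NormedSpace ℂ E₁] [CompleteSpace E₁]
    (R : ℂ → E₀ →L[ℂ] E₁) (S₁ : ℝ → E₀ →L[ℂ] E₁) (ϑ T : ℝ) : Prop :=
  ∀ t ∈ Set.Ioc (0:ℝ) T, ∀ x : E₀,
    S₁ t x = (2 * (Real.pi : ℂ) * Complex.I)⁻¹ •
      ∫ u : ℝ, (Complex.exp ((t : ℂ) * contour ϑ t u) * contourDeriv ϑ t u) •
        R (contour ϑ t u) x

/-! ### Auxiliary results -/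

open Filter

/-- The pointwise dominating function for the norm of the scalar part of the integrand. -/
noncomputable def gbound (ϑ t u : ℝ) : ℝ :=
  if |u| ≤ ϑ + Real.pi/2 then Real.exp 1 * t⁻¹
  else Real.exp (-Real.sin ϑ * (1 + t*(|u| - (ϑ + Real.pi/2))))

theorem contour_eq (ϑ t u : ℝ) (hθ : 0 ≤ ϑ + Real.pi/2) :
    contour ϑ t u = ((t⁻¹ + max (|u| - (ϑ + Real.pi/2)) 0 : ℝ) : ℂ)
      * Complex.exp (((max (-(ϑ + Real.pi/2)) (min u (ϑ + Real.pi/2)) : ℝ) : ℂ) * Complex.I) := by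
  unfold contour
  rw [show ϑ + Real.pi/2 = ϑ + Real.pi/2 from rfl] at hθ
  generalize hg : ϑ + Real.pi/2 = θ at hθ ⊢
  split_ifs with h1 h2
  · rw [max_eq_left (le_trans (min_le_left u θ) (by linarith)),
      abs_of_neg (by linarith), max_eq_left (by linarith)]
    push_cast; ring
  · rw [min_eq_left h2, max_eq_right (le_of_not_gt h1),
      max_eq_right (by rw [sub_nonpos]; exact abs_le.mpr ⟨le_of_not_gt (by intro h; exact h1 (by linarith)), h2⟩)]
    norm_num
  · push_neg at h1 h2
    rw [abs_of_pos (by linarith), max_eq_left (by linarith), min_eq_right (by linarith), max_eq_right (by linarith)]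

lemma norm_exp_aux (t r φ : ℝ) :
    ‖Complex.exp ((t : ℂ) * ((r : ℂ) * Complex.exp ((φ : ℂ) * Complex.I)))‖
      = Real.exp (t * r * Real.cos φ) := by
  rw [Complex.norm_exp]
  congr 1
  simp [Complex.exp_mul_I, Complex.mul_re, Complex.mul_im, Complex.cos_ofReal_re,
    Complex.sin_ofReal_re, Complex.cos_ofReal_im, Complex.sin_ofReal_im]
  ring

lemma norm_mul_exp_aux (r φ : ℝ) :
    ‖(r : ℂ) * Complex.exp ((φ : ℂ) * Complex.I)‖ = |r| := by
  rw [norm_mul, Complex.norm_exp_ofReal_mul_I,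
    mul_one, Complex.norm_real, Real.norm_eq_abs]

lemma contour_continuous {ϑ t : ℝ} (hθ : 0 ≤ ϑ + Real.pi/2) :
    Continuous (contour ϑ t) := by
  have h : contour ϑ t = fun u => ((t⁻¹ + max (|u| - (ϑ + Real.pi/2)) 0 : ℝ) : ℂ)
      * Complex.exp (((max (-(ϑ + Real.pi/2)) (min u (ϑ + Real.pi/2)) : ℝ) : ℂ) * Complex.I) :=
    funext fun u => contour_eq ϑ t u hθ
  rw [h]
  apply Continuous.mul
  · exact Complex.continuous_ofReal.comp
      (continuous_const.add ((continuous_abs.sub continuous_const).max continuous_const))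
  · exact Complex.continuous_exp.comp
      ((Complex.continuous_ofReal.comp
        (continuous_const.max (continuous_id.min continuous_const))).mul continuous_const)

lemma contourDeriv_measurable (ϑ t : ℝ) : Measurable (contourDeriv ϑ t) := by
  unfold contourDeriv
  apply Measurable.ite (measurableSet_lt measurable_id measurable_const) measurable_const
  apply Measurable.ite (measurableSet_le measurable_id measurable_const) _ measurable_const
  exact (continuous_const.mul (Complex.continuous_exp.comp
    (Complex.continuous_ofReal.mul continuous_const))).measurable

lemma norm_contour {ϑ t : ℝ} (hθ : 0 ≤ ϑ + Real.pi/2) (ht : 0 < t) (u : ℝ) :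
    ‖contour ϑ t u‖ = t⁻¹ + max (|u| - (ϑ + Real.pi/2)) 0 := by
  rw [contour_eq ϑ t u hθ, norm_mul_exp_aux, abs_of_nonneg]
  positivity

lemma contour_mem_sector {ϑ t : ℝ} (hϑ : ϑ ∈ Set.Ioo 0 (Real.pi/2)) (ht : 0 < t) (u : ℝ) :
    contour ϑ t u = 0 ∨ |Complex.arg (contour ϑ t u)| ≤ ϑ + Real.pi/2 := by
  right
  have hπ := Real.pi_pos
  have hθ0 : (0:ℝ) < ϑ + Real.pi/2 := by linarith [hϑ.1]
  have hθπ : ϑ + Real.pi/2 < Real.pi := by linarith [hϑ.2]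
  rw [contour_eq ϑ t u hθ0.le]
  set φ := max (-(ϑ + Real.pi/2)) (min u (ϑ + Real.pi/2)) with hφdef
  have hφ1 : -(ϑ + Real.pi/2) ≤ φ := le_max_left _ _
  have hφ2 : φ ≤ ϑ + Real.pi/2 := max_le (by linarith) (min_le_right _ _)
  have hr : (0:ℝ) < t⁻¹ + max (|u| - (ϑ + Real.pi/2)) 0 := by positivity
  rw [Complex.exp_mul_I,
    Complex.arg_real_mul _ hr,
    Complex.arg_cos_add_sin_mul_I ⟨by linarith, by linarith⟩]
  exact abs_le.mpr ⟨by linarith, by linarith⟩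

lemma scalar_bound {ϑ t : ℝ} (hϑ : ϑ ∈ Set.Ioo 0 (Real.pi/2)) (ht : 0 < t) (u : ℝ) :
    ‖Complex.exp ((t : ℂ) * contour ϑ t u) * contourDeriv ϑ t u‖ ≤ gbound ϑ t u := by
  have htt : t * t⁻¹ = 1 := mul_inv_cancel₀ ht.ne'
  have hθ0 : (0:ℝ) < ϑ + Real.pi/2 := by
    have := Real.pi_pos; linarith [hϑ.1]
  unfold contour contourDeriv gbound
  rw [norm_mul]
  rcases lt_or_ge u (-(ϑ + Real.pi/2)) with h | h
  · rw [if_pos h, if_pos h, if_neg (by rw [abs_of_neg (by linarith)]; push_neg; linarith)]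
    rw [norm_exp_aux, norm_neg, Complex.norm_exp_ofReal_mul_I, mul_one,
      Real.cos_neg, Real.cos_add_pi_div_two, abs_of_neg (by linarith : u < 0)]
    apply le_of_eq
    congr 1
    field_simp
    ring
  · rcases le_or_gt u (ϑ + Real.pi/2) with h2 | h2
    · rw [if_neg (not_lt.mpr h), if_neg (not_lt.mpr h), if_pos h2, if_pos h2,
        if_pos (abs_le.mpr ⟨by linarith, h2⟩)]
      rw [norm_exp_aux, norm_mul, norm_mul, Complex.norm_I, one_mul,
        Complex.norm_exp_ofReal_mul_I, mul_one,
        Complex.norm_real, Real.norm_eq_abs, abs_of_nonneg (inv_nonneg.mpr ht.le)]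
      have h3 : t * t⁻¹ * Real.cos u ≤ 1 := by rw [htt, one_mul]; exact Real.cos_le_one u
      exact mul_le_mul_of_nonneg_right (Real.exp_le_exp.mpr h3) (inv_nonneg.mpr ht.le)
    · rw [if_neg (not_lt.mpr h), if_neg (not_lt.mpr h), if_neg (not_le.mpr h2),
        if_neg (not_le.mpr h2), if_neg (by rw [abs_of_pos (by linarith)]; push_neg; linarith)]
      rw [norm_exp_aux, Complex.norm_exp_ofReal_mul_I, mul_one,
        Real.cos_add_pi_div_two, abs_of_pos (by linarith : 0 < u)]
      apply le_of_eq
      congr 1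
      field_simp

lemma myIntegral_exp_neg_mul_Ioi {a b : ℝ} (hb : 0 < b) :
    ∫ x in Ioi a, Real.exp (-b*x) = Real.exp (-b*a)/b := by
  have hderiv : ∀ x ∈ Ici a, HasDerivAt (fun y => -Real.exp (-b*y)/b) (Real.exp (-b*x)) x := by
    intro x _
    have h1 : HasDerivAt (fun y : ℝ => -b*y) (-b) x := by
      simpa using (hasDerivAt_id x).const_mul (-b)
    have := (h1.exp.neg).div_const b
    exact this.congr_deriv (by field_simp)
  have htend : Tendsto (fun y => -Real.exp (-b*y)/b) atTop (nhds 0) := by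
    have : Tendsto (fun y => -Real.exp (-b*y)/b) atTop (nhds (-0/b)) :=
      Tendsto.div_const (Tendsto.neg (Real.tendsto_exp_atBot.comp
        (tendsto_id.const_mul_atTop_of_neg (neg_neg_iff_pos.2 hb)))) b
    simpa using this
  rw [integral_Ioi_of_hasDerivAt_of_tendsto' hderiv (exp_neg_integrableOn_Ioi a hb) htend]
  field_simp
  ring

lemma myIntegrableOn_comp_neg {f : ℝ → ℝ} {c : ℝ} (hf : IntegrableOn f (Ioi c)) :
    IntegrableOn (fun u => f (-u)) (Iic (-c)) := by
  have A : MeasurableEmbedding fun x : ℝ => -x :=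
    (Homeomorph.neg ℝ).isClosedEmbedding.measurableEmbedding
  have h1 : (volume : Measure ℝ).restrict (Iic (-c))
      = Measure.map (fun x : ℝ => -x) (volume.restrict (Ici c)) := by
    rw [← Measure.map_neg_eq_self (volume : Measure ℝ),
      Measure.restrict_map A.measurable measurableSet_Iic]
    congr 1
    rw [show (fun x : ℝ => -x) ⁻¹' (Iic (-c)) = Ici c by ext x; simp,
      Measure.map_neg_eq_self (volume : Measure ℝ)]
  rw [IntegrableOn, h1, A.integrable_map_iff]
  have h2 : (fun u => f (-u)) ∘ (fun x : ℝ => -x) = f := by ext x; simp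
  rw [h2, ← IntegrableOn, integrableOn_Ici_iff_integrableOn_Ioi]
  exact hf

lemma gbound_nonneg {ϑ t : ℝ} (ht : 0 < t) (u : ℝ) : 0 ≤ gbound ϑ t u := by
  unfold gbound
  split_ifs
  · positivity
  · positivity

lemma gbound_props {ϑ t : ℝ} (hϑ : ϑ ∈ Set.Ioo 0 (Real.pi/2)) (ht : 0 < t) :
    Integrable (gbound ϑ t) ∧
    ∫ u, gbound ϑ t u ≤ (2*Real.pi*Real.exp 1 + 2/Real.sin ϑ) * t⁻¹ := by
  obtain ⟨hϑ0, hϑ2⟩ := hϑ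
  have hπ := Real.pi_pos
  have hs : 0 < Real.sin ϑ := Real.sin_pos_of_pos_of_lt_pi hϑ0 (by linarith)
  set s := Real.sin ϑ with hsdef
  set θ := ϑ + Real.pi/2 with hθdef
  have hθ0 : 0 < θ := by rw [hθdef]; linarith
  have hθπ : θ ≤ Real.pi := by rw [hθdef]; linarith
  have hst : 0 < s * t := mul_pos hs ht
  have hf2eq : ∀ v : ℝ, Real.exp (-s*(1+t*(v-θ)))
      = Real.exp (-s+s*t*θ) * Real.exp (-(s*t)*v) := by
    intro v; rw [← Real.exp_add]; congr 1; ring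
  have hi2 : IntegrableOn (fun v => Real.exp (-s*(1+t*(v-θ)))) (Ioi θ) := by
    simp only [hf2eq]
    exact (exp_neg_integrableOn_Ioi θ hst).const_mul _
  have hv2 : ∫ v in Ioi θ, Real.exp (-s*(1+t*(v-θ))) = Real.exp (-s)/(s*t) := by
    simp only [hf2eq]
    rw [MeasureTheory.integral_const_mul, myIntegral_exp_neg_mul_Ioi hst, ← mul_div_assoc,
      ← Real.exp_add]
    congr 2
    ring
  have hi3 : IntegrableOn (fun u => Real.exp (-s*(1+t*(-u-θ)))) (Iic (-θ)) := by
    have := myIntegrableOn_comp_neg (f := fun v => Real.exp (-s*(1+t*(v-θ)))) hi2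
    simpa using this
  have hv3 : ∫ u in Iic (-θ), Real.exp (-s*(1+t*(-u-θ))) = Real.exp (-s)/(s*t) := by
    have h := integral_comp_neg_Iic (-θ) (fun v => Real.exp (-s*(1+t*(v-θ))))
    rw [neg_neg] at h
    calc ∫ u in Iic (-θ), Real.exp (-s*(1+t*(-u-θ)))
        = ∫ u in Iic (-θ), Real.exp (-s*(1+t*(-u-θ))) := rfl
      _ = ∫ v in Ioi θ, Real.exp (-s*(1+t*(v-θ))) := h
      _ = Real.exp (-s)/(s*t) := hv2
  set F : ℝ → ℝ := fun u =>
    (Icc (-θ) θ).indicator (fun _ => Real.exp 1 * t⁻¹) u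
    + (Ioi θ).indicator (fun v => Real.exp (-s*(1+t*(v-θ)))) u
    + (Iic (-θ)).indicator (fun v => Real.exp (-s*(1+t*(-v-θ)))) u with hFdef
  have hF1 : Integrable ((Icc (-θ) θ).indicator (fun _ : ℝ => Real.exp 1 * t⁻¹)) :=
    (integrable_indicator_iff measurableSet_Icc).2
      (integrableOn_const measure_Icc_lt_top.ne)
  have hF2 : Integrable ((Ioi θ).indicator (fun v => Real.exp (-s*(1+t*(v-θ))))) :=
    (integrable_indicator_iff measurableSet_Ioi).2 hi2
  have hF3 : Integrable ((Iic (-θ)).indicator (fun v => Real.exp (-s*(1+t*(-v-θ))))) :=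
    (integrable_indicator_iff measurableSet_Iic).2 hi3
  have hFint : Integrable F := (hF1.add hF2).add hF3
  have hle : ∀ u, gbound ϑ t u ≤ F u := by
    intro u
    rw [hFdef]
    simp only [gbound, ← hθdef, ← hsdef]
    rcases le_or_gt (|u|) θ with h | h
    · rw [if_pos h]
      rw [indicator_of_mem (mem_Icc.mpr (abs_le.mp h)) _]
      have h2 : (Ioi θ).indicator (fun v => Real.exp (-s*(1+t*(v-θ)))) u = 0 :=
        indicator_of_notMem (by simp only [mem_Ioi, not_lt]; exact (abs_le.mp h).2) _
      have h3 : 0 ≤ (Iic (-θ)).indicator (fun v => Real.exp (-s*(1+t*(-v-θ)))) u := by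
        apply indicator_nonneg; intro v _; positivity
      rw [h2]
      linarith
    · rw [if_neg (not_le.mpr h)]
      have h1 : (Icc (-θ) θ).indicator (fun _ : ℝ => Real.exp 1 * t⁻¹) u = 0 :=
        indicator_of_notMem (by rw [mem_Icc, ← abs_le]; exact not_le.mpr h) _
      rcases lt_abs.mp h with hu | hu
      · rw [h1, indicator_of_mem (mem_Ioi.mpr hu),
          indicator_of_notMem (by simp only [mem_Iic, not_le]; linarith) _,
          abs_of_pos (lt_trans hθ0 hu)]
        simp
      · rw [h1, indicator_of_notMem (by simp only [mem_Ioi, not_lt]; linarith) _,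
          indicator_of_mem (mem_Iic.mpr (by linarith : u ≤ -θ)),
          abs_of_neg (by linarith : u < 0)]
        simp
  have hg_meas : Measurable (gbound ϑ t) := by
    unfold gbound
    apply Measurable.ite (measurableSet_le continuous_abs.measurable measurable_const)
      measurable_const
    exact Real.measurable_exp.comp
      ((((continuous_abs.measurable.sub measurable_const).const_mul t).const_add 1).const_mul
        (-Real.sin ϑ))
  have hgint : Integrable (gbound ϑ t) := by
    apply hFint.mono' hg_meas.aestronglyMeasurable
    filter_upwards with u
    rw [Real.norm_eq_abs, abs_of_nonneg (gbound_nonneg ht u)]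
    exact hle u
  refine ⟨hgint, ?_⟩
  have hexp1 : Real.exp (-s) ≤ 1 := by
    rw [← Real.exp_zero]
    exact Real.exp_le_exp.mpr (by linarith)
  have hF1v : ∫ u, (Icc (-θ) θ).indicator (fun _ : ℝ => Real.exp 1 * t⁻¹) u
      = (2*θ) * (Real.exp 1 * t⁻¹) := by
    rw [integral_indicator_const _ measurableSet_Icc, Real.volume_real_Icc_of_le (by linarith), smul_eq_mul]
    congr 1
    ring
  have hF2v : ∫ u, (Ioi θ).indicator (fun v => Real.exp (-s*(1+t*(v-θ)))) u
      = Real.exp (-s)/(s*t) := by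
    rw [integral_indicator measurableSet_Ioi]
    exact hv2
  have hF3v : ∫ u, (Iic (-θ)).indicator (fun v => Real.exp (-s*(1+t*(-v-θ)))) u
      = Real.exp (-s)/(s*t) := by
    rw [integral_indicator measurableSet_Iic]
    exact hv3
  calc ∫ u, gbound ϑ t u ≤ ∫ u, F u := integral_mono hgint hFint hle
    _ = (2*θ) * (Real.exp 1 * t⁻¹) + Real.exp (-s)/(s*t) + Real.exp (-s)/(s*t) := by
        have hF12 : Integrable (fun u => (Icc (-θ) θ).indicator (fun _ : ℝ => Real.exp 1 * t⁻¹) u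
            + (Ioi θ).indicator (fun v => Real.exp (-s*(1+t*(v-θ)))) u) := hF1.add hF2
        rw [hFdef]
        rw [integral_add hF12 ((integrable_indicator_iff measurableSet_Iic).2 hi3),
          integral_add hF1 hF2, hF1v, hF2v, hF3v]
    _ ≤ (2*Real.pi) * (Real.exp 1 * t⁻¹) + 1/(s*t) + 1/(s*t) := by
        gcongr <;> first
          | exact hθπ
          | exact hexp1
          | positivity
    _ = (2*Real.pi*Real.exp 1 + 2/s) * t⁻¹ := by
        field_simp
        ring

section OperatorLemmas

variable {E₀ E₁ : Type*} [NormedAddCommGroup E₀] [NormedSpace ℂ E₀]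
    [NormedAddCommGroup E₁] [NormedSpace ℂ E₁]
    (i : E₁ →L[ℂ] E₀) {A B : E₁ →L[ℂ] E₀} {RA RB R : ℂ → E₀ →L[ℂ] E₁} {ϑ c₀ : ℝ}

lemma resolvent_diff (hA : SectorialResolvent i A RA ϑ c₀) (hB : SectorialResolvent i B RB ϑ c₀)
    {z : ℂ} (hz : z = 0 ∨ |Complex.arg z| ≤ ϑ + Real.pi / 2) :
    RA z - RB z = (RA z).comp ((A - B).comp (RB z)) := by
  obtain ⟨hA1, hA2, -, -⟩ := hA z hz
  obtain ⟨hB1, -, -, -⟩ := hB z hz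
  have e1 : (RA z).comp ((z • i - B).comp (RB z)) = RA z := by
    rw [hB1, ContinuousLinearMap.comp_id]
  have e2 : (RA z).comp ((z • i - A).comp (RB z)) = RB z := by
    rw [← ContinuousLinearMap.comp_assoc, hA2, ContinuousLinearMap.id_comp]
  calc RA z - RB z
      = (RA z).comp ((z • i - B).comp (RB z)) - (RA z).comp ((z • i - A).comp (RB z)) := by
        rw [e1, e2]
    _ = (RA z).comp ((((z • i - B) - (z • i - A))).comp (RB z)) := by
        simp only [ContinuousLinearMap.sub_comp, ContinuousLinearMap.comp_sub]
    _ = (RA z).comp ((A - B).comp (RB z)) := by rw [sub_sub_sub_cancel_left]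

lemma resolvent_sub (hR : SectorialResolvent i A R ϑ c₀)
    {z w : ℂ} (hz : z = 0 ∨ |Complex.arg z| ≤ ϑ + Real.pi / 2)
    (hw : w = 0 ∨ |Complex.arg w| ≤ ϑ + Real.pi / 2) :
    R z - R w = (w - z) • ((R z).comp (i.comp (R w))) := by
  obtain ⟨-, hz2, -, -⟩ := hR z hz
  obtain ⟨hw1, -, -, -⟩ := hR w hw
  have e1 : (R z).comp ((w • i - A).comp (R w)) = R z := by
    rw [hw1, ContinuousLinearMap.comp_id]
  have e2 : (R z).comp ((z • i - A).comp (R w)) = R w := by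
    rw [← ContinuousLinearMap.comp_assoc, hz2, ContinuousLinearMap.id_comp]
  calc R z - R w
      = (R z).comp ((w • i - A).comp (R w)) - (R z).comp ((z • i - A).comp (R w)) := by
        rw [e1, e2]
    _ = (R z).comp ((((w • i - A) - (z • i - A))).comp (R w)) := by
        simp only [ContinuousLinearMap.sub_comp, ContinuousLinearMap.comp_sub]
    _ = (R z).comp (((w - z) • i).comp (R w)) := by rw [sub_sub_sub_cancel_right, ← sub_smul]
    _ = (w - z) • ((R z).comp (i.comp (R w))) := by
        rw [ContinuousLinearMap.smul_comp, ContinuousLinearMap.comp_smul]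

lemma resolvent_cont {t : ℝ} (hR : SectorialResolvent i A R ϑ c₀) (hc₀ : 0 < c₀)
    (hϑ : ϑ ∈ Set.Ioo 0 (Real.pi/2)) (ht : 0 < t) (x : E₀) :
    Continuous fun u : ℝ => R (contour ϑ t u) x := by
  have hπ := Real.pi_pos
  have hθ0 : (0:ℝ) ≤ ϑ + Real.pi/2 := by linarith [hϑ.1]
  set S : Set ℂ := {z : ℂ | z = 0 ∨ |Complex.arg z| ≤ ϑ + Real.pi/2} with hSdef
  have hLip : LipschitzOnWith (Real.toNNReal (c₀^2*‖x‖)) (fun z => R z x) S := by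
    rw [lipschitzOnWith_iff_dist_le_mul]
    intro z hz w hw
    rw [dist_eq_norm, Real.coe_toNNReal _ (by positivity), dist_eq_norm]
    have hiRw : ‖i.comp (R w)‖ ≤ c₀ := by
      have h1 := (hR w hw).2.2.1
      nlinarith [norm_nonneg w, norm_nonneg (i.comp (R w))]
    calc ‖R z x - R w x‖ = ‖(R z - R w) x‖ := by rw [ContinuousLinearMap.sub_apply]
      _ = ‖w - z‖ * ‖((R z).comp (i.comp (R w))) x‖ := by
          rw [resolvent_sub i hR hz hw, ContinuousLinearMap.smul_apply, norm_smul]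
      _ ≤ ‖w - z‖ * (c₀ * (c₀ * ‖x‖)) := by
          gcongr
          calc ‖((R z).comp (i.comp (R w))) x‖ ≤ ‖(R z).comp (i.comp (R w))‖ * ‖x‖ :=
                ContinuousLinearMap.le_opNorm _ _
            _ ≤ (‖R z‖ * ‖i.comp (R w)‖) * ‖x‖ := by
                gcongr
                exact ContinuousLinearMap.opNorm_comp_le _ _
            _ ≤ (c₀ * c₀) * ‖x‖ := by
                apply mul_le_mul_of_nonneg_right _ (norm_nonneg x)
                exact mul_le_mul (hR z hz).2.2.2 hiRw (norm_nonneg _) hc₀.le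
            _ = c₀ * (c₀ * ‖x‖) := by ring
      _ = c₀^2*‖x‖ * ‖z - w‖ := by rw [norm_sub_rev]; ring
  exact hLip.continuousOn.comp_continuous (contour_continuous hθ0)
    (fun u => contour_mem_sector hϑ ht u)

end OperatorLemmas

/-- Difference estimate for analytic semigroups:
`t^j ‖e^{tA} - e^{tB}‖_{L(E₀,E_j)} ≤ M ‖A - B‖_{L(E₁,E₀)}`, `j = 0,1`,
with `M` depending only on `c₀, ϑ, T`. -/
theorem stmt4
    {E₀ E₁ : Type*} [NormedAddCommGroup E₀] [NormedSpace ℂ E₀] [CompleteSpace E₀]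
    [NormedAddCommGroup E₁] [NormedSpace ℂ E₁] [CompleteSpace E₁]
    (i : E₁ →L[ℂ] E₀) (ϑ c₀ T : ℝ)
    (hϑ : ϑ ∈ Set.Ioo 0 (Real.pi / 2)) (hc₀ : 0 < c₀) (hT : 0 < T) :
    ∃ M > 0, ∀ (A B : E₁ →L[ℂ] E₀) (RA RB : ℂ → E₀ →L[ℂ] E₁)
      (SA₁ SB₁ : ℝ → E₀ →L[ℂ] E₁),
      SectorialResolvent i A RA ϑ c₀ →
      SectorialResolvent i B RB ϑ c₀ →
      IsDunfordSemigroup RA SA₁ ϑ T →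
      IsDunfordSemigroup RB SB₁ ϑ T →
      ∀ t ∈ Set.Ioc (0:ℝ) T,
        ‖i.comp (SA₁ t - SB₁ t)‖ ≤ M * ‖A - B‖ ∧
        t * ‖SA₁ t - SB₁ t‖ ≤ M * ‖A - B‖ := by
  have hπ := Real.pi_pos
  have hs : 0 < Real.sin ϑ := Real.sin_pos_of_pos_of_lt_pi hϑ.1 (by linarith [hϑ.2])
  have hθ0 : (0:ℝ) ≤ ϑ + Real.pi/2 := by linarith [hϑ.1]
  set K := 2*Real.pi*Real.exp 1 + 2/Real.sin ϑ with hKdef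
  have hK : 0 < K := add_pos (by positivity) (div_pos two_pos hs)
  refine ⟨K * c₀^2 + 1, by positivity, ?_⟩
  intro A B RA RB SA₁ SB₁ hRA hRB hSA hSB t ht
  obtain ⟨ht0, htT⟩ := ht
  set C : ℝ := c₀^2 * ‖A - B‖ with hCdef
  have hC : 0 ≤ C := by positivity
  have hsector : ∀ u : ℝ, contour ϑ t u = 0 ∨ |Complex.arg (contour ϑ t u)| ≤ ϑ + Real.pi/2 :=
    contour_mem_sector hϑ ht0
  have hdiff : ∀ u : ℝ, ‖RA (contour ϑ t u) - RB (contour ϑ t u)‖ ≤ C := by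
    intro u
    have h1 := (hRA _ (hsector u)).2.2.2
    have h2 := (hRB _ (hsector u)).2.2.2
    rw [resolvent_diff i hRA hRB (hsector u)]
    calc ‖(RA (contour ϑ t u)).comp ((A - B).comp (RB (contour ϑ t u)))‖
        ≤ ‖RA (contour ϑ t u)‖ * ‖(A - B).comp (RB (contour ϑ t u))‖ :=
          ContinuousLinearMap.opNorm_comp_le _ _
      _ ≤ ‖RA (contour ϑ t u)‖ * (‖A - B‖ * ‖RB (contour ϑ t u)‖) := by
          gcongr
          exact ContinuousLinearMap.opNorm_comp_le _ _
      _ ≤ c₀ * (‖A - B‖ * c₀) := by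
          apply mul_le_mul h1 _ (by positivity) hc₀.le
          exact mul_le_mul_of_nonneg_left h2 (norm_nonneg _)
      _ = C := by rw [hCdef]; ring
  have hdiffi : ∀ u : ℝ, ‖i.comp (RA (contour ϑ t u) - RB (contour ϑ t u))‖ ≤ t * C := by
    intro u
    have h1 := (hRA _ (hsector u)).2.2.1
    have h2 := (hRB _ (hsector u)).2.2.2
    have hz : t⁻¹ ≤ ‖contour ϑ t u‖ := by
      rw [norm_contour hθ0 ht0]
      exact le_add_of_nonneg_right (le_max_right _ _)
    have h3 : t⁻¹ ≤ 1 + ‖contour ϑ t u‖ := by linarith [norm_nonneg (contour ϑ t u)]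
    have hiRA : ‖i.comp (RA (contour ϑ t u))‖ ≤ c₀ * t := by
      have h4 : ‖i.comp (RA (contour ϑ t u))‖ * t⁻¹ ≤ c₀ := by
        nlinarith [norm_nonneg (i.comp (RA (contour ϑ t u)))]
      calc ‖i.comp (RA (contour ϑ t u))‖ = ‖i.comp (RA (contour ϑ t u))‖ * t⁻¹ * t := by
            field_simp
        _ ≤ c₀ * t := mul_le_mul_of_nonneg_right h4 ht0.le
    rw [resolvent_diff i hRA hRB (hsector u), ← ContinuousLinearMap.comp_assoc]
    calc ‖(i.comp (RA (contour ϑ t u))).comp ((A - B).comp (RB (contour ϑ t u)))‖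
        ≤ ‖i.comp (RA (contour ϑ t u))‖ * ‖(A - B).comp (RB (contour ϑ t u))‖ :=
          ContinuousLinearMap.opNorm_comp_le _ _
      _ ≤ ‖i.comp (RA (contour ϑ t u))‖ * (‖A - B‖ * ‖RB (contour ϑ t u)‖) := by
          gcongr
          exact ContinuousLinearMap.opNorm_comp_le _ _
      _ ≤ (c₀ * t) * (‖A - B‖ * c₀) := by
          apply mul_le_mul hiRA _ (by positivity) (by positivity)
          exact mul_le_mul_of_nonneg_left h2 (norm_nonneg _)
      _ = t * C := by rw [hCdef]; ring
  have hcnorm : ‖(2*(Real.pi:ℂ)*Complex.I)⁻¹‖ ≤ 1 := by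
    rw [norm_inv]
    apply inv_le_one_of_one_le₀
    rw [norm_mul, norm_mul, Complex.norm_I, mul_one]
    have e1 : ‖(2:ℂ)‖ = 2 := by norm_num
    have e2 : ‖((Real.pi:ℝ):ℂ)‖ = Real.pi := by
      rw [Complex.norm_real, Real.norm_eq_abs, abs_of_pos hπ]
    rw [e1, e2]
    nlinarith [Real.pi_gt_three]
  have key : ∀ x : E₀, ‖SA₁ t x - SB₁ t x‖ ≤ t⁻¹ * (K * C) * ‖x‖ ∧
      ‖i (SA₁ t x - SB₁ t x)‖ ≤ K * C * ‖x‖ := by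
    intro x
    obtain ⟨hgint, hgval⟩ := gbound_props hϑ ht0
    set sc : ℝ → ℂ := fun u => Complex.exp ((t:ℂ) * contour ϑ t u) * contourDeriv ϑ t u
      with hscdef
    have hsc_meas : Measurable sc :=
      (Complex.measurable_exp.comp (measurable_const.mul
        (contour_continuous hθ0).measurable)).mul (contourDeriv_measurable ϑ t)
    have hsc_bd : ∀ u, ‖sc u‖ ≤ gbound ϑ t u := scalar_bound hϑ ht0
    have hintA : Integrable (fun u => sc u • RA (contour ϑ t u) x) := by
      apply (hgint.mul_const (c₀ * ‖x‖)).mono'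
        (hsc_meas.aestronglyMeasurable.smul
          (resolvent_cont i hRA hc₀ hϑ ht0 x).aestronglyMeasurable)
      filter_upwards with u
      rw [Pi.smul_apply', norm_smul]
      have hb : ‖RA (contour ϑ t u) x‖ ≤ c₀ * ‖x‖ :=
        le_trans (ContinuousLinearMap.le_opNorm _ _)
          (mul_le_mul_of_nonneg_right (hRA _ (hsector u)).2.2.2 (norm_nonneg x))
      exact mul_le_mul (hsc_bd u) hb (norm_nonneg _) (gbound_nonneg ht0 u)
    have hintB : Integrable (fun u => sc u • RB (contour ϑ t u) x) := by
      apply (hgint.mul_const (c₀ * ‖x‖)).mono'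
        (hsc_meas.aestronglyMeasurable.smul
          (resolvent_cont i hRB hc₀ hϑ ht0 x).aestronglyMeasurable)
      filter_upwards with u
      rw [Pi.smul_apply', norm_smul]
      have hb : ‖RB (contour ϑ t u) x‖ ≤ c₀ * ‖x‖ :=
        le_trans (ContinuousLinearMap.le_opNorm _ _)
          (mul_le_mul_of_nonneg_right (hRB _ (hsector u)).2.2.2 (norm_nonneg x))
      exact mul_le_mul (hsc_bd u) hb (norm_nonneg _) (gbound_nonneg ht0 u)
    have hintD : Integrable (fun u => sc u • (RA (contour ϑ t u) x - RB (contour ϑ t u) x)) := by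
      have e : (fun u => sc u • (RA (contour ϑ t u) x - RB (contour ϑ t u) x))
          = fun u => sc u • RA (contour ϑ t u) x - sc u • RB (contour ϑ t u) x :=
        funext fun u => smul_sub _ _ _
      rw [e]
      exact hintA.sub hintB
    have hrep : SA₁ t x - SB₁ t x = (2*(Real.pi:ℂ)*Complex.I)⁻¹ •
        ∫ u, sc u • (RA (contour ϑ t u) x - RB (contour ϑ t u) x) := by
      rw [hSA t ⟨ht0, htT⟩ x, hSB t ⟨ht0, htT⟩ x, ← smul_sub, ← integral_sub hintA hintB]
      congr 1
      exact integral_congr_ae (Filter.Eventually.of_forall fun u => (smul_sub _ _ _).symm)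
    have hptD : ∀ u : ℝ, ‖sc u • (RA (contour ϑ t u) x - RB (contour ϑ t u) x)‖
        ≤ gbound ϑ t u * (C * ‖x‖) := by
      intro u
      rw [norm_smul]
      have hb : ‖RA (contour ϑ t u) x - RB (contour ϑ t u) x‖ ≤ C * ‖x‖ := by
        rw [← ContinuousLinearMap.sub_apply]
        exact le_trans (ContinuousLinearMap.le_opNorm _ _)
          (mul_le_mul_of_nonneg_right (hdiff u) (norm_nonneg x))
      exact mul_le_mul (hsc_bd u) hb (norm_nonneg _) (gbound_nonneg ht0 u)
    have hest1 : ‖∫ u, sc u • (RA (contour ϑ t u) x - RB (contour ϑ t u) x)‖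
        ≤ (K * t⁻¹) * (C * ‖x‖) := by
      calc ‖∫ u, sc u • (RA (contour ϑ t u) x - RB (contour ϑ t u) x)‖
          ≤ ∫ u, ‖sc u • (RA (contour ϑ t u) x - RB (contour ϑ t u) x)‖ :=
            norm_integral_le_integral_norm _
        _ ≤ ∫ u, gbound ϑ t u * (C * ‖x‖) :=
            integral_mono hintD.norm (hgint.mul_const _) hptD
        _ = (∫ u, gbound ϑ t u) * (C * ‖x‖) := integral_mul_const _ _
        _ ≤ (K * t⁻¹) * (C * ‖x‖) := by
            apply mul_le_mul_of_nonneg_right _ (by positivity)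
            rw [hKdef]
            exact hgval
    constructor
    · rw [hrep, norm_smul]
      calc ‖(2*(Real.pi:ℂ)*Complex.I)⁻¹‖ *
            ‖∫ u, sc u • (RA (contour ϑ t u) x - RB (contour ϑ t u) x)‖
          ≤ 1 * ((K * t⁻¹) * (C * ‖x‖)) :=
            mul_le_mul hcnorm hest1 (norm_nonneg _) one_pos.le
        _ = t⁻¹ * (K * C) * ‖x‖ := by ring
    · have hrep2 : i (SA₁ t x - SB₁ t x) = (2*(Real.pi:ℂ)*Complex.I)⁻¹ •
          ∫ u, sc u • (i (RA (contour ϑ t u) x - RB (contour ϑ t u) x)) := by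
        rw [hrep, _root_.map_smul]
        congr 1
        rw [← ContinuousLinearMap.integral_comp_comm i hintD]
        exact integral_congr_ae (Filter.Eventually.of_forall fun u => by
          simp only [_root_.map_smul])
      have hptD2 : ∀ u : ℝ, ‖sc u • (i (RA (contour ϑ t u) x - RB (contour ϑ t u) x))‖
          ≤ gbound ϑ t u * ((t * C) * ‖x‖) := by
        intro u
        rw [norm_smul]
        have hb : ‖i (RA (contour ϑ t u) x - RB (contour ϑ t u) x)‖ ≤ (t * C) * ‖x‖ := by
          rw [← ContinuousLinearMap.sub_apply, ← ContinuousLinearMap.comp_apply]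
          exact le_trans (ContinuousLinearMap.le_opNorm _ _)
            (mul_le_mul_of_nonneg_right (hdiffi u) (norm_nonneg x))
        exact mul_le_mul (hsc_bd u) hb (norm_nonneg _) (gbound_nonneg ht0 u)
      have hintD2 : Integrable (fun u => sc u • (i (RA (contour ϑ t u) x
          - RB (contour ϑ t u) x))) := by
        apply (hgint.mul_const ((t * C) * ‖x‖)).mono'
        · exact hsc_meas.aestronglyMeasurable.smul
            (i.continuous.comp ((resolvent_cont i hRA hc₀ hϑ ht0 x).sub
              (resolvent_cont i hRB hc₀ hϑ ht0 x))).aestronglyMeasurable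
        · filter_upwards with u
          exact hptD2 u
      rw [hrep2, norm_smul]
      calc ‖(2*(Real.pi:ℂ)*Complex.I)⁻¹‖ *
            ‖∫ u, sc u • (i (RA (contour ϑ t u) x - RB (contour ϑ t u) x))‖
          ≤ 1 * ((∫ u, gbound ϑ t u * ((t * C) * ‖x‖))) := by
            apply mul_le_mul hcnorm _ (norm_nonneg _) one_pos.le
            exact le_trans (norm_integral_le_integral_norm _)
              (integral_mono hintD2.norm (hgint.mul_const _) hptD2)
        _ = (∫ u, gbound ϑ t u) * ((t * C) * ‖x‖) := by rw [one_mul, integral_mul_const]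
        _ ≤ (K * t⁻¹) * ((t * C) * ‖x‖) := by
            apply mul_le_mul_of_nonneg_right _ (by positivity)
            rw [hKdef]
            exact hgval
        _ = (K * (t⁻¹ * t)) * (C * ‖x‖) := by ring
        _ = K * C * ‖x‖ := by rw [inv_mul_cancel₀ ht0.ne']; ring
  constructor
  · apply ContinuousLinearMap.opNorm_le_bound _ (by positivity)
    intro x
    have h := (key x).2
    calc ‖(i.comp (SA₁ t - SB₁ t)) x‖ = ‖i (SA₁ t x - SB₁ t x)‖ := by
          rw [ContinuousLinearMap.comp_apply, ContinuousLinearMap.sub_apply]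
      _ ≤ K * C * ‖x‖ := h
      _ ≤ (K * c₀^2 + 1) * ‖A - B‖ * ‖x‖ := by
          rw [hCdef]
          nlinarith [norm_nonneg (A - B), norm_nonneg x, mul_nonneg (norm_nonneg (A-B)) (norm_nonneg x)]
  · have hop : ‖SA₁ t - SB₁ t‖ ≤ t⁻¹ * (K * C) :=
      ContinuousLinearMap.opNorm_le_bound _ (by positivity) fun x => by
        have h := (key x).1
        calc ‖(SA₁ t - SB₁ t) x‖ = ‖SA₁ t x - SB₁ t x‖ := by
              rw [ContinuousLinearMap.sub_apply]
          _ ≤ t⁻¹ * (K * C) * ‖x‖ := h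
    calc t * ‖SA₁ t - SB₁ t‖ ≤ t * (t⁻¹ * (K * C)) := mul_le_mul_of_nonneg_left hop ht0.le
      _ = K * C := by field_simp
      _ ≤ (K * c₀^2 + 1) * ‖A - B‖ := by
          rw [hCdef]
          nlinarith [norm_nonneg (A - B)]
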